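/- In the SAT reduction grammar, for every truth assignment σ to the variables v_1,…,v_n there is a derivation with yield c_0 v_1 ⋯ v_n v_{n+1} whose root category is [c_0] / [v_1=σ(v_1)] ⋯ / [v_n=σ(v_n)]; conversely, every derivation for this substring with target [c_0] has a root category of this form for some assignment σ. -/

import Mathlib

/-- Categories of VW-CCG over atomic categories coded by natural numbers.
`slash d X Y` is `X /ᵈ Y` where `d = true` is a forward slash `/` and
`d = false` is a backward slash `\`. -/
inductive Cat : Type where
  | atom : ℕ → Cat
  | slash : Bool → Cat → Cat → Cat
deriving DecidableEq

namespace Cat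

/-- The target (innermost atomic category). -/
def target : Cat → ℕ
  | atom a => a
  | slash _ X _ => X.target

/-- The argument stack of a category, bottom of the stack first. -/
def args : Cat → List (Bool × Cat)
  | atom _ => []
  | slash d X Y => X.args ++ [(d, Y)]

/-- The number of arguments of a category. -/
def numArgs (X : Cat) : ℕ := X.args.length

/-- The size (number of symbols) of a category. -/
def size : Cat → ℕ
  | atom _ => 1
  | slash _ X Y => X.size + Y.size + 1

/-- `ArgOccurs p X` holds if the slash–category pair `p` occurs as an
argument somewhere inside the category `X`. -/
def ArgOccurs (p : Bool × Cat) : Cat → Prop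
  | atom _ => False
  | slash d X Y => (d, Y) = p ∨ ArgOccurs p X ∨ ArgOccurs p Y

end Cat

/-- Build `A /₁ X₁ ⋯ /ₘ Xₘ` from a target and an argument list. -/
def Cat.mk' (t : ℕ) (as : List (Bool × Cat)) : Cat :=
  as.foldl (fun c p => Cat.slash p.1 c p.2) (Cat.atom t)

/-- Push additional arguments on the stack of a category. -/
def appendArgs (X : Cat) (zs : List (Bool × Cat)) : Cat :=
  zs.foldl (fun c p => Cat.slash p.1 c p.2) X

/-- A VW-CCG combinatory rule: a (forward or backward) combinatory schema of
degree `zRestr.length`, optionally restricting the target of the variable `X`,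
the category `Y`, and the slashes and categories of the arguments
`/₁ Z₁ ⋯ /_d Z_d` of the secondary input. -/
structure Rule where
  fwd : Bool
  tRestr : Option ℕ
  yRestr : Option Cat
  zRestr : List (Bool × Option Cat)

/-- The degree of a rule. -/
def Rule.degree (r : Rule) : ℕ := r.zRestr.length

/-- `r.Inst L R O` holds if `L R ⇛ O` is a ground instance of the rule `r`:
forward: `X/Y  Y/₁Z₁⋯/_dZ_d ⇛ X/₁Z₁⋯/_dZ_d`;
backward: `Y/₁Z₁⋯/_dZ_d  X\Y ⇛ X/₁Z₁⋯/_dZ_d`, respecting the restrictions. -/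
def Rule.Inst (r : Rule) (L R O : Cat) : Prop :=
  ∃ (X Y : Cat) (zs : List (Bool × Cat)),
    (∀ t, r.tRestr = some t → X.target = t) ∧
    (∀ Y', r.yRestr = some Y' → Y = Y') ∧
    List.Forall₂ (fun (p : Bool × Option Cat) (z : Bool × Cat) =>
      z.1 = p.1 ∧ ∀ Z, p.2 = some Z → z.2 = Z) r.zRestr zs ∧
    O = appendArgs X zs ∧
    (if r.fwd then L = Cat.slash true X Y ∧ R = appendArgs Y zs
     else R = Cat.slash false X Y ∧ L = appendArgs Y zs)

/-- A VW-CCG grammar: a finite lexicon assigning categories to vocabulary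
symbols (coded by naturals) or to the empty string (`none`), a finite set of
combinatory rules, and a distinguished atomic category. -/
structure Grammar where
  lex : List (Option ℕ × Cat)
  rules : List Rule
  start : ℕ

/-- A grammar is ε-free if no lexicon entry is for the empty string. -/
def Grammar.EpsFree (G : Grammar) : Prop := ∀ e ∈ G.lex, e.1 ≠ none

/-- Derivation trees: leaves carry lexicon entries (`none` = empty string),
internal nodes carry categories and have exactly two children. -/
inductive DTree where
  | leaf : Option ℕ → Cat → DTree
  | node : Cat → DTree → DTree → DTree

namespace DTree

/-- The category at the root. -/
def top : DTree → Cat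
  | leaf _ X => X
  | node X _ _ => X

/-- The yield: left-to-right concatenation of the symbols at the leaves. -/
def yield : DTree → List ℕ
  | leaf none _ => []
  | leaf (some σ) _ => [σ]
  | node _ l r => l.yield ++ r.yield

/-- The total number of nodes. -/
def nodes : DTree → ℕ
  | leaf _ _ => 1
  | node _ l r => l.nodes + r.nodes + 1

/-- `τ.Valid G`: `τ` is a derivation tree of the grammar `G`. -/
def Valid (G : Grammar) : DTree → Prop
  | leaf σ X => (σ, X) ∈ G.lex
  | node X l r => Valid G l ∧ Valid G r ∧ ∃ rl ∈ G.rules, rl.Inst l.top r.top X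

/-- `τ.CatAt C`: the category `C` labels some node of `τ`. -/
def CatAt : DTree → Cat → Prop
  | leaf _ X, C => C = X
  | node X l r, C => C = X ∨ l.CatAt C ∨ r.CatAt C

end DTree

/-- The language generated by a grammar. -/
def Grammar.Lang (G : Grammar) : Set (List ℕ) :=
  { w | ∃ τ : DTree, τ.Valid G ∧ τ.top = Cat.atom G.start ∧ τ.yield = w }

/-- CNF formulas: clauses are lists of literals (sign, variable index). -/
abbrev CNF := List (List (Bool × ℕ))

/-- Satisfiability of a CNF formula. -/
def CNF.Satisfiable (φ : CNF) : Prop :=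
  ∃ σ : ℕ → Bool, ∀ c ∈ φ, ∃ l ∈ c, σ l.2 = l.1

/-! Atomic categories of the SAT-reduction grammar (`m` = number of
clauses): `aCent` is `[¢]`, `aC i` is `[c_i]`, `aV m j b` is `[v_j = b]`. -/

def aCent : ℕ := 0
def aC (i : ℕ) : ℕ := 1 + i
def aV (m j : ℕ) (b : Bool) : ℕ := m + 2 + 2 * j + cond b 1 0

/-! Vocabulary symbols: `sC i` is `c_i`, `sV m j` is `v_j`, `sD m n j` is
`d_j`. -/

def sC (i : ℕ) : ℕ := i
def sV (m j : ℕ) : ℕ := m + j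
def sD (m n j : ℕ) : ℕ := m + n + 1 + j

/-- The secondary-input restriction `𝟙_j` / `𝟘_j`: `n` forward
slash–variable pairs with the `j`-th (1-based) position fixed to
`[v_j = b]`. -/
def oneHot (n m j : ℕ) (b : Bool) : List (Bool × Option Cat) :=
  (List.range n).map fun k =>
    (true, if k = j - 1 then some (Cat.atom (aV m j b)) else none)

/-- The ε-free VW-CCG grammar constructed from a CNF formula `φ` with `n`
variables in the NP-hardness reduction. -/
def satGrammar (n : ℕ) (φ : CNF) : Grammar :=
  let m := φ.length
  { lex :=
      -- c_0 := [c_0]/[¢]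
      (some (sC 0), Cat.slash true (Cat.atom (aC 0)) (Cat.atom aCent)) ::
      -- c_i := [c_i]/[c_{i−1}] for 1 ≤ i ≤ m
      (((List.range m).map fun i =>
          (some (sC (i + 1)), Cat.slash true (Cat.atom (aC (i + 1))) (Cat.atom (aC i)))) ++
       -- v_j := [¢]/[v_j=b]/[¢] for 1 ≤ j ≤ n, b ∈ {0,1}
       ((List.range n).flatMap fun j =>
          [true, false].map fun b =>
            (some (sV m (j + 1)),
              Cat.mk' aCent [(true, Cat.atom (aV m (j + 1) b)), (true, Cat.atom aCent)])) ++
       -- v_{n+1} := [¢]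
       [(some (sV m (n + 1)), Cat.atom aCent)] ++
       -- d_j := [v_j=b]
       ((List.range n).flatMap fun j =>
          [true, false].map fun b => (some (sD m n (j + 1)), Cat.atom (aV m (j + 1) b))))
    rules :=
      -- guessing: X/[¢]  [¢]/[v_j=b]/[¢] ⇒ X/[v_j=b]/[¢]
      ((List.range n).flatMap fun j =>
        [true, false].map fun b =>
          ⟨true, none, some (Cat.atom aCent),
            [(true, some (Cat.atom (aV m (j + 1) b))), (true, some (Cat.atom aCent))]⟩) ++
      -- X/[¢]  [¢] ⇒ X
      [⟨true, none, some (Cat.atom aCent), []⟩] ++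
      -- clause checking: X/[c_{i−1}]  [c_{i−1}] 𝟙_j ⇒ X 𝟙_j (v_j in c_i), etc.
      ((List.range m).flatMap fun i =>
        (φ.getD i []).map fun l =>
          ⟨true, none, some (Cat.atom (aC i)), oneHot n m l.2 l.1⟩) ++
      -- X/[v_j=b]  [v_j=b] ⇒ X
      ((List.range n).flatMap fun j =>
        [true, false].map fun b => ⟨true, none, some (Cat.atom (aV m (j + 1) b)), []⟩)
    start := aC m }

/-- The input string `w = c_m ⋯ c_1 c_0 v_1 ⋯ v_n v_{n+1} d_n ⋯ d_1` of the
reduction. -/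
def wSAT (m n : ℕ) : List ℕ :=
  ((List.range (m + 1)).reverse.map sC) ++
  ((List.range (n + 1)).map fun j => sV m (j + 1)) ++
  ((List.range n).reverse.map fun j => sD m n (j + 1))

/-- The category `[c_0] / [v_1=σ(v_1)] ⋯ / [v_n=σ(v_n)]` encoding the truth
assignment `σ`. -/
def guessTop (n m : ℕ) (σ : ℕ → Bool) : Cat :=
  Cat.mk' (aC 0) ((List.range n).map fun j => (true, Cat.atom (aV m (j + 1) (σ (j + 1)))))

/-- The substring `c_0 v_1 ⋯ v_n v_{n+1}`. -/
def wGuess (m n : ℕ) : List ℕ :=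
  sC 0 :: ((List.range (n + 1)).map fun j => sV m (j + 1))

namespace SatAux

lemma appendArgs_nil (X : Cat) : appendArgs X [] = X := rfl

lemma appendArgs_cons (X : Cat) (z zs') : appendArgs X (z :: zs') = appendArgs (Cat.slash z.1 X z.2) zs' := rfl

lemma appendArgs_args (zs : List (Bool × Cat)) : ∀ X, (appendArgs X zs).args = X.args ++ zs := by
  induction zs with
  | nil => simp [appendArgs]
  | cons z zs ih => intro X; rw [appendArgs_cons, ih]; simp [Cat.args]

lemma appendArgs_target (zs : List (Bool × Cat)) : ∀ X, (appendArgs X zs).target = X.target := by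
  induction zs with
  | nil => simp [appendArgs]
  | cons z zs ih => intro X; rw [appendArgs_cons, ih]; simp [Cat.target]

lemma mk'_args (t : ℕ) (as : List (Bool × Cat)) : (Cat.mk' t as).args = as := by
  show (appendArgs (Cat.atom t) as).args = as
  rw [appendArgs_args]; simp [Cat.args]

lemma mk'_target (t : ℕ) (as : List (Bool × Cat)) : (Cat.mk' t as).target = t := by
  show (appendArgs (Cat.atom t) as).target = t
  rw [appendArgs_target]; rfl

lemma mk'_append (t : ℕ) (l₁ l₂ : List (Bool × Cat)) :
    Cat.mk' t (l₁ ++ l₂) = appendArgs (Cat.mk' t l₁) l₂ := by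
  simp [Cat.mk', appendArgs, List.foldl_append]

lemma mk'_snoc (t : ℕ) (l : List (Bool × Cat)) (p : Bool × Cat) :
    Cat.mk' t (l ++ [p]) = Cat.slash p.1 (Cat.mk' t l) p.2 := by
  rw [mk'_append]; rfl

lemma mk'_inj {t₁ t₂ : ℕ} {l₁ l₂ : List (Bool × Cat)}
    (h : Cat.mk' t₁ l₁ = Cat.mk' t₂ l₂) : t₁ = t₂ ∧ l₁ = l₂ := by
  constructor
  · have := congrArg Cat.target h; rwa [mk'_target, mk'_target] at this
  · have := congrArg Cat.args h; rwa [mk'_args, mk'_args] at this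

end SatAux

namespace SatAux

def g (m j : ℕ) : ℕ := if j = 0 then 0 else m + j

def vargs (m : ℕ) (σ : ℕ → Bool) (s c : ℕ) : List (Bool × Cat) :=
  (List.range c).map fun i => (true, Cat.atom (aV m (s + i) (σ (s + i))))

def Tcat (m nn a len : ℕ) (σ : ℕ → Bool) : Cat :=
  Cat.mk' (if a = 0 then aC 0 else aCent)
    (vargs m σ (max a 1) (min (a + len - 1) nn + 1 - max a 1) ++
      (if a + len ≤ nn + 1 then [(true, Cat.atom aCent)] else []))

lemma vargs_length (m σ s c) : (vargs m σ s c).length = c := by simp [vargs]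

lemma vargs_succ (m σ s c) :
    vargs m σ s (c + 1) = vargs m σ s c ++ [(true, Cat.atom (aV m (s + c) (σ (s + c))))] := by
  simp [vargs, List.range_succ]

lemma vargs_congr {m s c : ℕ} {σ σ' : ℕ → Bool} (h : ∀ i < c, σ (s + i) = σ' (s + i)) :
    vargs m σ s c = vargs m σ' s c := by
  unfold vargs
  apply List.map_congr_left
  intro i hi
  rw [h i (List.mem_range.mp hi)]

lemma mem_lex {n : ℕ} {φ : CNF} {e : Option ℕ × Cat} (h : e ∈ (satGrammar n φ).lex) :
    e = (some (sC 0), Cat.slash true (Cat.atom (aC 0)) (Cat.atom aCent)) ∨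
    (∃ i, i < φ.length ∧
      e = (some (sC (i+1)), Cat.slash true (Cat.atom (aC (i+1))) (Cat.atom (aC i)))) ∨
    (∃ j, j < n ∧ ∃ b : Bool, e = (some (sV φ.length (j+1)),
        Cat.mk' aCent [(true, Cat.atom (aV φ.length (j+1) b)), (true, Cat.atom aCent)])) ∨
    e = (some (sV φ.length (n+1)), Cat.atom aCent) ∨
    (∃ j, j < n ∧ ∃ b : Bool, e = (some (sD φ.length n (j+1)),
        Cat.atom (aV φ.length (j+1) b))) := by
  simp only [satGrammar, List.mem_cons, List.mem_append, List.mem_map, List.mem_flatMap,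
    List.mem_range, List.mem_singleton] at h
  rcases h with h | ((⟨i, hi, he⟩ | ⟨j, hj, b, _, he⟩) | h | h) | ⟨j, hj, b, _, he⟩
  · exact Or.inl h
  · exact Or.inr (Or.inl ⟨i, hi, he.symm⟩)
  · exact Or.inr (Or.inr (Or.inl ⟨j, hj, b, he.symm⟩))
  · exact Or.inr (Or.inr (Or.inr (Or.inl h)))
  · simp at h
  · exact Or.inr (Or.inr (Or.inr (Or.inr ⟨j, hj, b, he.symm⟩)))

lemma mem_rules {n : ℕ} {φ : CNF} {r : Rule} (h : r ∈ (satGrammar n φ).rules) :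
    (∃ j : ℕ, ∃ b : Bool, r = ⟨true, none, some (Cat.atom aCent),
        [(true, some (Cat.atom (aV φ.length (j+1) b))), (true, some (Cat.atom aCent))]⟩) ∨
    r = ⟨true, none, some (Cat.atom aCent), []⟩ ∨
    (r.fwd = true ∧ ∃ t, r.yRestr = some (Cat.atom t) ∧ t ≠ aCent) := by
  simp only [satGrammar, List.mem_cons, List.mem_append, List.mem_map, List.mem_flatMap,
    List.mem_range, List.mem_singleton] at h
  rcases h with ((⟨j, hj, b, _, he⟩ | h | h) | ⟨i, hi, l, hl, he⟩) | ⟨j, hj, b, _, he⟩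
  · exact Or.inl ⟨j, b, he.symm⟩
  · exact Or.inr (Or.inl h)
  · simp at h
  · refine Or.inr (Or.inr ?_)
    rw [← he]
    exact ⟨rfl, aC i, rfl, by simp [aC, aCent]⟩
  · refine Or.inr (Or.inr ?_)
    rw [← he]
    exact ⟨rfl, aV φ.length (j+1) b, rfl, by cases b <;> simp [aV, aCent]⟩

lemma inst_guess {v L R O : Cat}
    (h : Rule.Inst ⟨true, none, some (Cat.atom aCent),
        [(true, some v), (true, some (Cat.atom aCent))]⟩ L R O) :
    ∃ X, L = Cat.slash true X (Cat.atom aCent) ∧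
      R = Cat.mk' aCent [(true, v), (true, Cat.atom aCent)] ∧
      O = appendArgs X [(true, v), (true, Cat.atom aCent)] := by
  obtain ⟨X, Y, zs, _, hy, hz, hO, hIf⟩ := h
  simp only [show (⟨true, none, some (Cat.atom aCent),
    [(true, some v), (true, some (Cat.atom aCent))]⟩ : Rule).fwd = true from rfl,
    if_true] at hIf
  obtain ⟨hL, hR⟩ := hIf
  have hY : Y = Cat.atom aCent := hy _ rfl
  subst hY
  rcases hz with _ | ⟨⟨h11, h12⟩, hz⟩
  rename_i z1 zs1
  rcases hz with _ | ⟨⟨h21, h22⟩, hz⟩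
  rename_i z2 zs2
  rcases hz
  have e1 : z1 = (true, v) := Prod.ext h11 (h12 v rfl)
  have e2 : z2 = (true, Cat.atom aCent) := Prod.ext h21 (h22 _ rfl)
  subst e1 e2
  exact ⟨X, hL, hR, hO⟩

lemma inst_d0 {L R O : Cat}
    (h : Rule.Inst ⟨true, none, some (Cat.atom aCent), []⟩ L R O) :
    L = Cat.slash true O (Cat.atom aCent) ∧ R = Cat.atom aCent := by
  obtain ⟨X, Y, zs, _, hy, hz, hO, hIf⟩ := h
  simp only [show (⟨true, none, some (Cat.atom aCent), []⟩ : Rule).fwd = true from rfl,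
    if_true] at hIf
  obtain ⟨hL, hR⟩ := hIf
  have hY : Y = Cat.atom aCent := hy _ rfl
  subst hY
  rcases hz
  subst hO
  exact ⟨hL, hR⟩

lemma inst_guess_intro (X v : Cat) :
    Rule.Inst ⟨true, none, some (Cat.atom aCent),
        [(true, some v), (true, some (Cat.atom aCent))]⟩
      (Cat.slash true X (Cat.atom aCent))
      (Cat.mk' aCent [(true, v), (true, Cat.atom aCent)])
      (appendArgs X [(true, v), (true, Cat.atom aCent)]) := by
  refine ⟨X, Cat.atom aCent, [(true, v), (true, Cat.atom aCent)], ?_, ?_, ?_, rfl, ?_⟩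
  · intro t ht; cases ht
  · intro Y' hY'; cases hY'; rfl
  · refine List.Forall₂.cons ⟨rfl, ?_⟩ (List.Forall₂.cons ⟨rfl, ?_⟩ List.Forall₂.nil)
    · intro Z hZ; cases hZ; rfl
    · intro Z hZ; cases hZ; rfl
  · exact ⟨rfl, rfl⟩

lemma inst_d0_intro (X : Cat) :
    Rule.Inst ⟨true, none, some (Cat.atom aCent), []⟩
      (Cat.slash true X (Cat.atom aCent)) (Cat.atom aCent) X := by
  refine ⟨X, Cat.atom aCent, [], ?_, ?_, List.Forall₂.nil, rfl, rfl, rfl⟩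
  · intro t ht; cases ht
  · intro Y' hY'; cases hY'; rfl

lemma guess_mem {n : ℕ} {φ : CNF} {j : ℕ} (hj : j < n) (b : Bool) :
    (⟨true, none, some (Cat.atom aCent),
      [(true, some (Cat.atom (aV φ.length (j+1) b))), (true, some (Cat.atom aCent))]⟩ : Rule)
      ∈ (satGrammar n φ).rules := by
  simp only [satGrammar, List.mem_cons, List.mem_append, List.mem_map, List.mem_flatMap,
    List.mem_range, List.mem_singleton]
  exact Or.inl (Or.inl (Or.inl ⟨j, hj, b, by cases b <;> simp, by simp⟩))

lemma d0_mem {n : ℕ} {φ : CNF} :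
    (⟨true, none, some (Cat.atom aCent), []⟩ : Rule) ∈ (satGrammar n φ).rules := by
  simp only [satGrammar, List.mem_cons, List.mem_append, List.mem_map, List.mem_flatMap,
    List.mem_range, List.mem_singleton]
  exact Or.inl (Or.inl (Or.inr (Or.inl (by simp))))

lemma c0_lex_mem {n : ℕ} {φ : CNF} :
    ((some (sC 0), Cat.slash true (Cat.atom (aC 0)) (Cat.atom aCent)) : Option ℕ × Cat)
      ∈ (satGrammar n φ).lex := by
  exact List.mem_cons_self

lemma v_lex_mem {n : ℕ} {φ : CNF} {j : ℕ} (hj : j < n) (b : Bool) :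
    ((some (sV φ.length (j+1)),
      Cat.mk' aCent [(true, Cat.atom (aV φ.length (j+1) b)), (true, Cat.atom aCent)])
      : Option ℕ × Cat) ∈ (satGrammar n φ).lex := by
  simp only [satGrammar, List.mem_cons, List.mem_append, List.mem_map, List.mem_flatMap,
    List.mem_range, List.mem_singleton]
  exact Or.inr (Or.inl (Or.inl (Or.inr ⟨j, hj, b, by cases b <;> simp, by simp⟩)))

lemma vend_lex_mem {n : ℕ} {φ : CNF} :
    ((some (sV φ.length (n+1)), Cat.atom aCent) : Option ℕ × Cat)
      ∈ (satGrammar n φ).lex := by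
  simp only [satGrammar, List.mem_cons, List.mem_append, List.mem_map, List.mem_flatMap,
    List.mem_range, List.mem_singleton]
  exact Or.inr (Or.inl (Or.inr (Or.inl (by simp))))

end SatAux

namespace SatAux

lemma vargs_zero (m : ℕ) (σ : ℕ → Bool) (s : ℕ) : vargs m σ s 0 = [] := rfl

lemma vargs_one (m : ℕ) (σ : ℕ → Bool) (s : ℕ) :
    vargs m σ s 1 = [(true, Cat.atom (aV m s (σ s)))] := by
  rw [show (1 : ℕ) = 0 + 1 from rfl, vargs_succ]
  simp [vargs]

lemma vargs_two (m : ℕ) (σ : ℕ → Bool) (s : ℕ) :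
    vargs m σ s 2 = [(true, Cat.atom (aV m s (σ s))),
      (true, Cat.atom (aV m (s + 1) (σ (s + 1))))] := by
  rw [show (2 : ℕ) = 0 + 1 + 1 from rfl, vargs_succ, vargs_succ]
  simp [vargs]

lemma Tcat_args (m nn a len : ℕ) (σ : ℕ → Bool) :
    (Tcat m nn a len σ).args =
      vargs m σ (max a 1) (min (a + len - 1) nn + 1 - max a 1) ++
        (if a + len ≤ nn + 1 then [(true, Cat.atom aCent)] else []) := by
  unfold Tcat; rw [mk'_args]

lemma Tcat_snoc {m nn a len : ℕ} (σ : ℕ → Bool) (h1 : 1 ≤ len) (h2 : a + len ≤ nn + 1) :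
    Tcat m nn a len σ =
      Cat.slash true
        (Cat.mk' (if a = 0 then aC 0 else aCent) (vargs m σ (max a 1) (a + len - max a 1)))
        (Cat.atom aCent) := by
  unfold Tcat
  rw [if_pos h2, min_eq_left (by omega),
    show a + len - 1 + 1 - max a 1 = a + len - max a 1 by omega, mk'_snoc]

lemma Tcat_full {m nn a len : ℕ} (σ : ℕ → Bool) (h2 : a + len = nn + 2) :
    Tcat m nn a len σ =
      Cat.mk' (if a = 0 then aC 0 else aCent) (vargs m σ (max a 1) (nn + 1 - max a 1)) := by
  unfold Tcat
  rw [if_neg (show ¬ a + len ≤ nn + 1 by omega), min_eq_right (by omega), List.append_nil]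

lemma Tcat_c0 (m nn : ℕ) (σ : ℕ → Bool) :
    Tcat m nn 0 1 σ = Cat.slash true (Cat.atom (aC 0)) (Cat.atom aCent) := by
  rw [Tcat_snoc σ le_rfl (by omega)]
  norm_num [vargs, Cat.mk']

lemma Tcat_mid {m nn a : ℕ} (σ : ℕ → Bool) (ha : 1 ≤ a) (han : a ≤ nn) :
    Tcat m nn a 1 σ =
      Cat.mk' aCent [(true, Cat.atom (aV m a (σ a))), (true, Cat.atom aCent)] := by
  rw [Tcat_snoc σ le_rfl (by omega)]
  rw [show (Cat.mk' aCent [(true, Cat.atom (aV m a (σ a))), (true, Cat.atom aCent)] : Cat) =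
    Cat.mk' aCent ([(true, Cat.atom (aV m a (σ a)))] ++ [(true, Cat.atom aCent)]) from rfl,
    mk'_snoc]
  rw [if_neg (show ¬ a = 0 by omega), show max a 1 = a by omega,
    show a + 1 - a = 1 by omega, vargs_one]

lemma Tcat_end (m nn : ℕ) (σ : ℕ → Bool) :
    Tcat m nn (nn + 1) 1 σ = Cat.atom aCent := by
  rw [Tcat_full σ (by omega), show max (nn + 1) 1 = nn + 1 by omega]
  norm_num [vargs, Cat.mk']

lemma yield_ne_nil {n : ℕ} {φ : CNF} {τ : DTree} : τ.Valid (satGrammar n φ) →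
    τ.yield ≠ [] := by
  induction τ with
  | leaf o X =>
    intro h
    have h' := mem_lex (n := n) (φ := φ) h
    have : ∃ s, o = some s := by
      rcases h' with he | ⟨i, _, he⟩ | ⟨j, _, b, he⟩ | he | ⟨j, _, b, he⟩ <;>
        exact ⟨_, congrArg Prod.fst he⟩
    obtain ⟨s, rfl⟩ := this
    simp [DTree.yield]
  | node X l r ihl ihr =>
    intro h hc
    obtain ⟨hl, -, -⟩ := h
    have : l.yield ++ r.yield = [] := hc
    exact ihl hl (List.append_eq_nil_iff.mp this).1

lemma sound {n : ℕ} {φ : CNF} : ∀ τ : DTree, τ.Valid (satGrammar n φ) →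
    ∀ a len, 1 ≤ len → a + len ≤ n + 2 →
      τ.yield = (List.range' a len).map (g φ.length) →
      ∃ σ, τ.top = Tcat φ.length n a len σ := by
  intro τ
  induction τ with
  | leaf o X =>
    intro hv a len h1 h2 hy
    cases o with
    | none =>
      exfalso
      have := congrArg List.length hy
      simp [DTree.yield] at this
      omega
    | some s =>
      have hyl := congrArg List.length hy
      simp [DTree.yield] at hyl
      obtain rfl : len = 1 := by omega
      have hs : s = g φ.length a := by
        simp [DTree.yield, List.range'] at hy
        exact hy
      have htop : (DTree.leaf (some s) X).top = X := rfl
      rw [htop]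
      rcases mem_lex (n := n) (φ := φ) hv with he | ⟨i, hi, he⟩ | ⟨j, hj, b, he⟩
        | he | ⟨j, hj, b, he⟩ <;>
        rw [Prod.mk.injEq] at he
      · obtain ⟨he1, he2⟩ := he
        injection he1 with he1
        have ha : a = 0 := by
          subst he1; unfold g sC at hs; split at hs <;> omega
        subst ha he2
        exact ⟨fun _ => true, by rw [Tcat_c0]⟩
      · obtain ⟨he1, he2⟩ := he
        injection he1 with he1
        exfalso
        subst he1; unfold g sC at hs; split at hs <;> omega
      · obtain ⟨he1, he2⟩ := he
        injection he1 with he1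
        have ha : a = j + 1 := by
          subst he1; unfold g sV at hs; split at hs <;> omega
        subst ha he2
        exact ⟨fun _ => b, by rw [Tcat_mid (fun _ => b) (by omega) (by omega)]⟩
      · obtain ⟨he1, he2⟩ := he
        injection he1 with he1
        have ha : a = n + 1 := by
          subst he1; unfold g sV at hs; split at hs <;> omega
        subst ha he2
        exact ⟨fun _ => true, by rw [Tcat_end]⟩
      · obtain ⟨he1, he2⟩ := he
        injection he1 with he1
        exfalso
        subst he1; unfold g sD at hs; split at hs <;> omega
  | node X l r ihl ihr =>
    intro hv a len h1 h2 hy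
    obtain ⟨hvl, hvr, rl, hrl, hinst⟩ := hv
    have hyn : (DTree.node X l r).yield = l.yield ++ r.yield := rfl
    rw [hyn] at hy
    set m := φ.length with hm
    set k := l.yield.length with hk
    have hkl : 1 ≤ k := by
      have := yield_ne_nil hvl
      rw [hk]; exact List.length_pos_iff.mpr this
    have hkr : 1 ≤ r.yield.length := by
      have := yield_ne_nil hvr
      exact List.length_pos_iff.mpr this
    have hlenEq : k + r.yield.length = len := by
      have := congrArg List.length hy
      simpa using this
    have hklen : k + 1 ≤ len := by omega
    obtain ⟨hyl, hyr⟩ := List.append_inj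
      (hy.trans (by rw [← List.map_append, show (len : ℕ) = k + (len - k) by omega,
        ← List.range'_append_1])) (by simp [hk])
    obtain ⟨σ₁, htl⟩ := ihl hvl a k hkl (by omega) hyl
    obtain ⟨σ₂, htr⟩ := ihr hvr (a + k) (len - k) (by omega) (by omega) hyr
    have htl' : l.top = Cat.slash true
        (Cat.mk' (if a = 0 then aC 0 else aCent) (vargs m σ₁ (max a 1) (a + k - max a 1)))
        (Cat.atom aCent) := by
      rw [htl, Tcat_snoc σ₁ hkl (by omega)]
    set t₀ : ℕ := if a = 0 then aC 0 else aCent with ht₀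
    set vs₁ := vargs m σ₁ (max a 1) (a + k - max a 1) with hvs₁
    have hXtop : (DTree.node X l r).top = X := rfl
    rw [hXtop]
    rcases mem_rules (n := n) (φ := φ) hrl with ⟨j, b, rfl⟩ | rfl | ⟨hfwd, t, hyR, htne⟩
    · -- guessing rule
      obtain ⟨X', hL, hR, hO⟩ := inst_guess hinst
      rw [htl'] at hL
      injection hL with _ hX' hY'
      have hargs := congrArg Cat.args (htr.symm.trans hR)
      rw [Tcat_args, mk'_args, show a + k + (len - k) = a + len by omega] at hargs
      by_cases hcent : a + len ≤ n + 1
      · rw [if_pos hcent] at hargs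
        rw [show min (a + len - 1) n = a + len - 1 by omega,
          show max (a + k) 1 = a + k by omega,
          show a + len - 1 + 1 - (a + k) = len - k by omega] at hargs
        have hlk : len - k = 1 := by
          have := congrArg List.length hargs
          simp [vargs] at this
          omega
        rw [hlk, vargs_one] at hargs
        simp only [List.cons_append, List.nil_append, List.cons.injEq, Prod.mk.injEq] at hargs
        obtain ⟨⟨-, hv⟩, -⟩ := hargs
        refine ⟨fun i => if i = a + k then σ₂ (a + k) else σ₁ i, ?_⟩
        rw [hO, ← hX', ← mk'_append,
          show vs₁ ++ [(true, Cat.atom (aV m (j + 1) b)), (true, Cat.atom aCent)] =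
            (vs₁ ++ [(true, Cat.atom (aV m (j + 1) b))]) ++ [(true, Cat.atom aCent)] by simp,
          mk'_snoc, Tcat_snoc _ h1 hcent]
        congr 1
        congr 1
        rw [show a + len - max a 1 = (a + k - max a 1) + 1 by omega, vargs_succ,
          show max a 1 + (a + k - max a 1) = a + k by omega,
          vargs_congr (σ' := σ₁) (fun i hi => by
            have hne : max a 1 + i ≠ a + k := by omega
            simp [hne])]
        rw [← hvs₁]
        simp [hv]
        rfl
      · -- impossible: right part would cover v_{n+1}
        exfalso
        rw [if_neg hcent] at hargs
        rw [show min (a + len - 1) n = n by omega,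
          show max (a + k) 1 = a + k by omega, List.append_nil] at hargs
        have hc : n + 1 - (a + k) = 2 := by
          have := congrArg List.length hargs
          simp [vargs] at this
          omega
        rw [hc, vargs_two] at hargs
        simp only [List.cons.injEq, Prod.mk.injEq] at hargs
        obtain ⟨-, ⟨-, h2⟩, -⟩ := hargs
        cases hσ : σ₂ (a + k + 1) <;> simp [hσ, aV, aCent] at h2
    · -- degree 0 rule
      obtain ⟨hL, hR⟩ := inst_d0 hinst
      rw [htl'] at hL
      injection hL with _ hX' hY'
      have hargs := congrArg Cat.args (htr.symm.trans hR)
      rw [Tcat_args, show a + k + (len - k) = a + len by omega,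
        show (Cat.atom aCent : Cat).args = [] from rfl] at hargs
      obtain ⟨hv2, hcentl⟩ := List.append_eq_nil_iff.mp hargs
      have hcent : ¬ (a + len ≤ n + 1) := by
        intro hc; rw [if_pos hc] at hcentl; simp at hcentl
      have hfull : a + len = n + 2 := by omega
      rw [show max (a + k) 1 = a + k by omega,
        show min (a + len - 1) n = n by omega] at hv2
      have hcnt : n + 1 - (a + k) = 0 := by
        have := congrArg List.length hv2
        simpa [vargs] using this
      refine ⟨σ₁, ?_⟩
      rw [← hX', Tcat_full σ₁ hfull]
      rw [hvs₁, show a + k - max a 1 = n + 1 - max a 1 by omega]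
    · -- other rules: Y is not [¢]
      exfalso
      obtain ⟨X', Y, zs, -, hyr2, -, -, hIf⟩ := hinst
      rw [hfwd, if_pos rfl] at hIf
      obtain ⟨hL, -⟩ := hIf
      have hY : Y = Cat.atom t := hyr2 _ hyR
      rw [htl', hY] at hL
      injection hL with _ _ hYY
      injection hYY with hYY
      exact htne hYY.symm

end SatAux

namespace SatAux

def gTree (m : ℕ) (σ : ℕ → Bool) : ℕ → DTree
  | 0 => .leaf (some (sC 0)) (Cat.slash true (Cat.atom (aC 0)) (Cat.atom aCent))
  | k + 1 => .node
      (appendArgs (Cat.mk' (aC 0) (vargs m σ 1 k))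
        [(true, Cat.atom (aV m (k + 1) (σ (k + 1)))), (true, Cat.atom aCent)])
      (gTree m σ k)
      (.leaf (some (sV m (k + 1)))
        (Cat.mk' aCent [(true, Cat.atom (aV m (k + 1) (σ (k + 1)))), (true, Cat.atom aCent)]))

lemma gTree_top (m : ℕ) (σ : ℕ → Bool) (k : ℕ) :
    (gTree m σ k).top =
      Cat.slash true (Cat.mk' (aC 0) (vargs m σ 1 k)) (Cat.atom aCent) := by
  cases k with
  | zero => simp [gTree, DTree.top, vargs, Cat.mk']
  | succ k =>
    show appendArgs (Cat.mk' (aC 0) (vargs m σ 1 k))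
        [(true, Cat.atom (aV m (k + 1) (σ (k + 1)))), (true, Cat.atom aCent)] = _
    rw [vargs_succ, show (1 : ℕ) + k = k + 1 by omega, ← mk'_append,
      show vargs m σ 1 k ++ [(true, Cat.atom (aV m (k + 1) (σ (k + 1)))),
          (true, Cat.atom aCent)] =
        (vargs m σ 1 k ++ [(true, Cat.atom (aV m (k + 1) (σ (k + 1))))]) ++
          [(true, Cat.atom aCent)] by simp,
      mk'_snoc]

lemma gTree_yield (m : ℕ) (σ : ℕ → Bool) (k : ℕ) :
    (gTree m σ k).yield = (List.range' 0 (k + 1)).map (g m) := by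
  induction k with
  | zero => simp [gTree, DTree.yield, List.range', g, sC]
  | succ k ih =>
    show (gTree m σ k).yield ++ [sV m (k + 1)] = _
    rw [ih, List.range'_1_concat (s := 0) (n := k + 1), List.map_append]
    simp [g, sV]

lemma gTree_valid {n : ℕ} {φ : CNF} (σ : ℕ → Bool) : ∀ k, k ≤ n →
    (gTree φ.length σ k).Valid (satGrammar n φ) := by
  intro k
  induction k with
  | zero => intro _; exact c0_lex_mem
  | succ k ih =>
    intro hk
    refine ⟨ih (by omega), v_lex_mem (show k < n by omega) (σ (k + 1)), ?_⟩
    refine ⟨_, guess_mem (show k < n by omega) (σ (k + 1)), ?_⟩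
    have h := inst_guess_intro (Cat.mk' (aC 0) (vargs φ.length σ 1 k))
      (Cat.atom (aV φ.length (k + 1) (σ (k + 1))))
    rw [← gTree_top φ.length σ k] at h
    exact h

def gTreeF (m nn : ℕ) (σ : ℕ → Bool) : DTree :=
  .node (Cat.mk' (aC 0) (vargs m σ 1 nn)) (gTree m σ nn)
    (.leaf (some (sV m (nn + 1))) (Cat.atom aCent))

lemma gTreeF_valid {n : ℕ} {φ : CNF} (σ : ℕ → Bool) :
    (gTreeF φ.length n σ).Valid (satGrammar n φ) := by
  refine ⟨gTree_valid σ n le_rfl, vend_lex_mem, ?_⟩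
  refine ⟨_, d0_mem, ?_⟩
  have h := inst_d0_intro (Cat.mk' (aC 0) (vargs φ.length σ 1 n))
  rw [← gTree_top φ.length σ n] at h
  exact h

lemma wGuess_eq (m nn : ℕ) : (List.range' 0 (nn + 2)).map (g m) = wGuess m nn := by
  unfold wGuess
  rw [show nn + 2 = (nn + 1) + 1 from rfl, List.range'_succ, List.map_cons]
  congr 1
  rw [List.range'_eq_map_range, List.map_map]
  apply List.map_congr_left
  intro i hi
  simp [g, sV, Nat.add_comm]

lemma guessTop_eq (m nn : ℕ) (σ : ℕ → Bool) :
    Cat.mk' (aC 0) (vargs m σ 1 nn) = guessTop nn m σ := by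
  unfold guessTop vargs
  congr 1
  apply List.map_congr_left
  intro i hi
  rw [Nat.add_comm 1 i]

end SatAux


/-- Part 1 of the SAT reduction: for every truth assignment `σ` there is a
derivation with yield `c_0 v_1 ⋯ v_n v_{n+1}` whose root category is
`[c_0] / [v_1=σ(v_1)] ⋯ / [v_n=σ(v_n)]`; conversely, every derivation for
this substring whose root category has target `[c_0]` has a root category of
this form for some assignment `σ`. -/
theorem guessing_correct (n : ℕ) (φ : CNF) :
    (∀ σ : ℕ → Bool, ∃ τ : DTree, τ.Valid (satGrammar n φ) ∧
        τ.yield = wGuess φ.length n ∧ τ.top = guessTop n φ.length σ) ∧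
    (∀ τ : DTree, τ.Valid (satGrammar n φ) → τ.yield = wGuess φ.length n →
        τ.top.target = aC 0 → ∃ σ : ℕ → Bool, τ.top = guessTop n φ.length σ) := by
  constructor
  · intro σ
    refine ⟨SatAux.gTreeF φ.length n σ, SatAux.gTreeF_valid σ, ?_, ?_⟩
    · show (SatAux.gTree φ.length σ n).yield ++ [sV φ.length (n + 1)] = wGuess φ.length n
      rw [SatAux.gTree_yield, ← SatAux.wGuess_eq]
      rw [show n + 2 = (n + 1) + 1 from rfl, List.range'_1_concat (s := 0) (n := n + 1), List.map_append]
      simp [SatAux.g, sV]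
    · show Cat.mk' (aC 0) (SatAux.vargs φ.length σ 1 n) = guessTop n φ.length σ
      exact SatAux.guessTop_eq φ.length n σ
  · intro τ hv hy htgt
    obtain ⟨σ, htop⟩ := SatAux.sound τ hv 0 (n + 2) (by omega) (by omega)
      (by rw [hy, ← SatAux.wGuess_eq])
    refine ⟨σ, ?_⟩
    rw [htop, SatAux.Tcat_full σ (by omega)]
    norm_num
    exact SatAux.guessTop_eq φ.length n σ
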